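/- Let n ≥ 4 be an even integer. Then the rank of the Q-walk matrix W_Q(A_n) (over ℚ) equals ⌈n/2⌉. -/

import Mathlib

open Matrix BigOperators

def QmatAn (n : ℕ) : Matrix (Fin n) (Fin n) ℤ :=
  Matrix.of fun i j =>
    (if (i : ℕ) + 1 = (j : ℕ) ∨ (j : ℕ) + 1 = (i : ℕ) then 1 else 0) +
    (if i = j then (if (i : ℕ) = 0 ∨ (i : ℕ) = n - 1 then 1 else 2) else 0)

def WQAn (n : ℕ) : Matrix (Fin n) (Fin n) ℤ :=
  Matrix.of fun i j => ((QmatAn n) ^ (j : ℕ)).mulVec (fun _ => 1) i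

namespace WQAux

/-- folded Jacobi matrix -/
def Qp (m : ℕ) : Matrix (Fin m) (Fin m) ℚ :=
  Matrix.of fun i j =>
    (if (i : ℕ) + 1 = (j : ℕ) ∨ (j : ℕ) + 1 = (i : ℕ) then 1 else 0) +
    (if i = j then (if (i : ℕ) = m - 1 then 3 else if (i : ℕ) = 0 then 1 else 2) else 0)

/-- unfolding matrix -/
def U (m : ℕ) : Matrix (Fin (2*m)) (Fin m) ℚ :=
  Matrix.of fun i k => if (i : ℕ) = (k : ℕ) ∨ (i : ℕ) + (k : ℕ) + 1 = 2*m then 1 else 0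

/-- row selection -/
def Rsel (m : ℕ) : Matrix (Fin m) (Fin (2*m)) ℚ :=
  Matrix.of fun k i => if (i : ℕ) = (k : ℕ) then 1 else 0

def Qr (n : ℕ) : Matrix (Fin n) (Fin n) ℚ := (QmatAn n).map (Int.cast : ℤ → ℚ)

def B (m : ℕ) : Matrix (Fin m) (Fin (2*m)) ℚ :=
  Matrix.of fun k j => ((Qp m ^ (j : ℕ)) *ᵥ (fun _ => 1)) k

def fold (m : ℕ) (i : Fin (2*m)) : Fin m :=
  if h : (i : ℕ) < m then ⟨i, h⟩ else ⟨2*m - 1 - i, by have := i.isLt; omega⟩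

lemma fold_val (m : ℕ) (i : Fin (2*m)) :
    (fold m i : ℕ) = if (i : ℕ) < m then (i : ℕ) else 2*m - 1 - (i : ℕ) := by
  unfold fold; split <;> rfl

lemma U_apply (m : ℕ) (i : Fin (2*m)) (k : Fin m) :
    U m i k = if k = fold m i then 1 else 0 := by
  have h1 := i.isLt; have h2 := k.isLt
  simp only [U, of_apply, Fin.ext_iff, fold_val]
  split_ifs <;> first | rfl | omega

lemma sum_if_val {n : ℕ} (f : Fin n → ℚ) (c : ℕ) (hc : c < n) :
    (∑ l : Fin n, if (l : ℕ) = c then f l else 0) = f ⟨c, hc⟩ := by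
  rw [Finset.sum_eq_single_of_mem ⟨c, hc⟩ (Finset.mem_univ _)]
  · simp
  · intro x _ hx
    rw [if_neg]
    exact fun h => hx (Fin.ext h)

lemma RU (m : ℕ) : Rsel m * U m = 1 := by
  ext k k'
  have hk := k.isLt
  rw [Matrix.mul_apply]
  have hL : ∀ i : Fin (2*m), Rsel m k i * U m i k' =
      if (i : ℕ) = (k : ℕ) then U m i k' else 0 := by
    intro i
    simp only [Rsel, of_apply]
    split_ifs <;> ring1
  rw [Finset.sum_congr rfl (fun i _ => hL i), sum_if_val _ _ (by omega)]
  rw [U_apply, Matrix.one_apply]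
  have hf : (fold m ⟨(k:ℕ), by omega⟩ : ℕ) = (k : ℕ) := by
    rw [fold_val]; simp only; split_ifs <;> omega
  by_cases h : k = k'
  · subst h; rw [if_pos rfl, if_pos (Fin.ext hf.symm)]
  · rw [if_neg h, if_neg]
    exact fun hc => h (Fin.ext (by rw [← hf, hc]))

set_option maxHeartbeats 1000000 in
lemma QU (m : ℕ) (hm : 2 ≤ m) : Qr (2*m) * U m = U m * Qp m := by
  ext i k
  have hi := i.isLt; have hk := k.isLt
  rw [Matrix.mul_apply, Matrix.mul_apply]
  have hL : ∀ l : Fin (2*m), Qr (2*m) i l * U m l k =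
      (if (l:ℕ) = (k:ℕ) then Qr (2*m) i l else 0) +
      (if (l:ℕ) = 2*m-1-(k:ℕ) then Qr (2*m) i l else 0) := by
    intro l; have hl := l.isLt
    simp only [U, of_apply]
    split_ifs <;> first | ring1 | (exfalso; omega)
  have hR : ∀ l : Fin m, U m i l * Qp m l k =
      (if (l:ℕ) = ((fold m i) : ℕ) then Qp m l k else 0) := by
    intro l
    rw [U_apply]
    by_cases h : l = fold m i
    · subst h; simp
    · rw [if_neg h, if_neg (fun hv => h (Fin.ext hv)), zero_mul]
  rw [Finset.sum_congr rfl (fun l _ => hL l), Finset.sum_add_distrib,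
    sum_if_val _ _ (by omega : (k:ℕ) < 2*m), sum_if_val _ _ (by omega : 2*m-1-(k:ℕ) < 2*m),
    Finset.sum_congr rfl (fun l _ => hR l), sum_if_val _ _ (fold m i).isLt, Fin.eta]
  have hfv := fold_val m i
  simp only [Qr, Matrix.map_apply, QmatAn, Qp, of_apply, Int.cast_add,
    apply_ite (fun z : ℤ => (z : ℚ)), Int.cast_one, Int.cast_ofNat, Fin.ext_iff, hfv]
  rcases Nat.lt_or_ge (i : ℕ) m with hc | hc
  · simp only [if_pos hc]
    split_ifs <;> (try norm_num) <;> omega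
  · simp only [if_neg (by omega : ¬ (i:ℕ) < m)]
    split_ifs <;> (try norm_num) <;> omega

lemma QUpow (m : ℕ) (hm : 2 ≤ m) (j : ℕ) : Qr (2*m) ^ j * U m = U m * Qp m ^ j := by
  induction j with
  | zero => simp
  | succ j ih =>
      rw [pow_succ', Matrix.mul_assoc, ih, ← Matrix.mul_assoc, QU m hm,
        Matrix.mul_assoc, ← pow_succ']

lemma mulVec_U (m : ℕ) (w : Fin m → ℚ) : U m *ᵥ w = fun i => w (fold m i) := by
  funext i
  simp [Matrix.mulVec, dotProduct, U_apply, ite_mul, one_mul, zero_mul,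
    Finset.sum_ite_eq', Finset.mem_univ]

lemma Uu (m : ℕ) : U m *ᵥ (fun _ => (1:ℚ)) = fun _ => 1 := by
  rw [mulVec_U]

lemma UB_apply (m : ℕ) (i : Fin (2*m)) (j : Fin (2*m)) :
    (U m * B m) i j = B m (fold m i) j := by
  simp [Matrix.mul_apply, U_apply, ite_mul, one_mul, zero_mul,
    Finset.sum_ite_eq', Finset.mem_univ]

lemma W_eq (m : ℕ) (hm : 2 ≤ m) :
    (WQAn (2*m)).map (Int.cast : ℤ → ℚ) = U m * B m := by
  ext i j
  have h1 : ((WQAn (2*m)).map (Int.cast : ℤ → ℚ)) i j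
      = ((Qr (2*m)) ^ (j:ℕ) *ᵥ (fun _ => 1)) i := by
    simp only [WQAn, Matrix.map_apply, of_apply]
    have h : Qr (2*m) ^ (j:ℕ) = ((QmatAn (2*m)) ^ (j:ℕ)).map (Int.cast : ℤ → ℚ) := by
      have := map_pow ((Int.castRingHom ℚ).mapMatrix) (QmatAn (2*m)) (j:ℕ)
      simpa [Qr, RingHom.mapMatrix_apply] using this.symm
    rw [h]
    simp only [Matrix.mulVec, dotProduct, Matrix.map_apply]
    push_cast
    rfl
  rw [h1]
  have h2 : (Qr (2*m)) ^ (j:ℕ) *ᵥ (fun _ => (1:ℚ)) = U m *ᵥ (Qp m ^ (j:ℕ) *ᵥ (fun _ => 1)) := by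
    rw [Matrix.mulVec_mulVec, ← QUpow m hm, ← Matrix.mulVec_mulVec, Uu]
  rw [h2, mulVec_U, UB_apply]
  rfl

def uvec (m : ℕ) : Fin m → ℚ := fun _ => 1
def cvec (m : ℕ) (j : ℕ) : Fin m → ℚ := (Qp m ^ j) *ᵥ uvec m
def K (m t : ℕ) : Submodule ℚ (Fin m → ℚ) := Submodule.span ℚ (cvec m '' Set.Iic t)

lemma cvec_mem (m : ℕ) {j t : ℕ} (hj : j ≤ t) : cvec m j ∈ K m t :=
  Submodule.subset_span ⟨j, hj, rfl⟩

lemma K_mono (m : ℕ) {s t : ℕ} (hst : s ≤ t) : K m s ≤ K m t :=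
  Submodule.span_mono (Set.image_mono (Set.Iic_subset_Iic.2 hst))

lemma cvec_succ (m : ℕ) (j : ℕ) : Qp m *ᵥ cvec m j = cvec m (j+1) := by
  rw [cvec, cvec, Matrix.mulVec_mulVec, ← pow_succ']

lemma mapA (m : ℕ) {t : ℕ} {x : Fin m → ℚ} (hx : x ∈ K m t) :
    Qp m *ᵥ x ∈ K m (t+1) := by
  have h1 : Qp m *ᵥ x = (Qp m).mulVecLin x := rfl
  rw [h1]
  have h2 : (Qp m).mulVecLin x ∈ Submodule.map (Qp m).mulVecLin (K m t) :=
    Submodule.mem_map_of_mem hx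
  refine (?_ : Submodule.map (Qp m).mulVecLin (K m t) ≤ K m (t+1)) h2
  rw [K, Submodule.map_span, Submodule.span_le]
  rintro _ ⟨_, ⟨j, hj, rfl⟩, rfl⟩
  simp only [SetLike.mem_coe, Matrix.mulVecLin_apply, cvec_succ]
  exact cvec_mem m (by simpa using Nat.succ_le_succ hj)

lemma sum_if_val' {n : ℕ} (f : Fin n → ℚ) (c : ℕ) :
    (∑ l : Fin n, if (l : ℕ) = c then f l else 0) = if h : c < n then f ⟨c, h⟩ else 0 := by
  split_ifs with h
  · exact sum_if_val f c h
  · exact Finset.sum_eq_zero fun l _ => if_neg (by have := l.isLt; omega)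

def esingle (m k : ℕ) (h : k < m) : Fin m → ℚ := Pi.single ⟨k, h⟩ 1

lemma F1 (m : ℕ) (hm : 2 ≤ m) :
    Qp m *ᵥ uvec m = (4:ℚ) • uvec m - (2:ℚ) • esingle m 0 (by omega) := by
  funext i
  have hi := i.isLt
  have hlhs : (Qp m *ᵥ uvec m) i = ∑ l, Qp m i l := by
    simp [Matrix.mulVec, dotProduct, uvec]
  have hrhs : ((4:ℚ) • uvec m - (2:ℚ) • esingle m 0 (by omega)) i
      = 4 - 2 * (if (i:ℕ) = 0 then 1 else 0) := by
    simp only [esingle, Pi.sub_apply, Pi.smul_apply, uvec, Pi.single_apply, Fin.ext_iff, smul_eq_mul]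
    split_ifs <;> norm_num
  rw [hlhs, hrhs]
  rcases Nat.eq_zero_or_pos (i : ℕ) with h0 | h0
  · have hp : ∀ l : Fin m, Qp m i l =
        (if (l:ℕ) = 0 then (1:ℚ) else 0) + (if (l:ℕ) = 1 then (1:ℚ) else 0) := by
      intro l; have hl := l.isLt
      simp only [Qp, of_apply, Fin.ext_iff]
      split_ifs <;> (try norm_num) <;> omega
    rw [Finset.sum_congr rfl fun l _ => hp l, Finset.sum_add_distrib,
      sum_if_val' _ 0, sum_if_val' _ 1, dif_pos (by omega : 0 < m),
      dif_pos (by omega : 1 < m), if_pos h0]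
    norm_num
  · rcases eq_or_ne (i : ℕ) (m - 1) with h1 | h1
    · have hp : ∀ l : Fin m, Qp m i l =
          (if (l:ℕ) = m - 2 then (1:ℚ) else 0) + (if (l:ℕ) = m - 1 then (3:ℚ) else 0) := by
        intro l; have hl := l.isLt
        simp only [Qp, of_apply, Fin.ext_iff]
        split_ifs <;> (try norm_num) <;> omega
      rw [Finset.sum_congr rfl fun l _ => hp l, Finset.sum_add_distrib,
        sum_if_val' _ (m-2), sum_if_val' _ (m-1), dif_pos (by omega : m - 2 < m),
        dif_pos (by omega : m - 1 < m), if_neg (by omega)]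
      norm_num
    · have hp : ∀ l : Fin m, Qp m i l =
          (if (l:ℕ) = (i:ℕ) - 1 then (1:ℚ) else 0) + ((if (l:ℕ) = (i:ℕ) then (2:ℚ) else 0) +
          (if (l:ℕ) = (i:ℕ) + 1 then (1:ℚ) else 0)) := by
        intro l; have hl := l.isLt
        simp only [Qp, of_apply, Fin.ext_iff]
        split_ifs <;> (try norm_num) <;> omega
      rw [Finset.sum_congr rfl fun l _ => hp l, Finset.sum_add_distrib, Finset.sum_add_distrib,
        sum_if_val' _ ((i:ℕ)-1), sum_if_val' _ (i:ℕ), sum_if_val' _ ((i:ℕ)+1),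
        dif_pos (by omega : (i:ℕ) - 1 < m), dif_pos (by omega : (i:ℕ) < m),
        dif_pos (by omega : (i:ℕ) + 1 < m), if_neg (by omega)]
      norm_num

lemma F2 (m : ℕ) (hm : 2 ≤ m) :
    Qp m *ᵥ esingle m 0 (by omega) = esingle m 0 (by omega) + esingle m 1 (by omega) := by
  funext i
  have hi := i.isLt
  rw [show Qp m *ᵥ esingle m 0 (by omega) = fun i => Qp m i ⟨0, by omega⟩ * 1 from
    Matrix.mulVec_single _ _ _]
  simp only [esingle, Pi.add_apply, Pi.single_apply, Qp, of_apply, Fin.ext_iff, mul_one]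
  split_ifs <;> first | (exfalso; omega) | tauto | norm_num

lemma F3 (m : ℕ) (k : ℕ) (h2 : k + 2 < m) :
    Qp m *ᵥ esingle m (k+1) (by omega) = esingle m k (by omega) +
      ((2:ℚ) • esingle m (k+1) (by omega) + esingle m (k+2) (by omega)) := by
  funext i
  have hi := i.isLt
  rw [show Qp m *ᵥ esingle m (k+1) (by omega) = fun i => Qp m i ⟨k+1, by omega⟩ * 1 from
    Matrix.mulVec_single _ _ _]
  simp only [esingle, Pi.add_apply, Pi.smul_apply, Pi.single_apply, Qp, of_apply,
    Fin.ext_iff, mul_one, smul_eq_mul]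
  split_ifs <;> first | (exfalso; omega) | tauto | norm_num

lemma eMem (m : ℕ) (hm : 2 ≤ m) :
    ∀ k, ∀ hk : k < m, esingle m k hk ∈ K m (k+1) := by
  intro k
  induction k using Nat.strong_induction_on with
  | _ k ih =>
    intro hk
    match k, hk with
    | 0, hk =>
      have hc0 : cvec m 0 = uvec m := by simp [cvec]
      have hc1 : cvec m 1 = (4:ℚ) • uvec m - (2:ℚ) • esingle m 0 (by omega) := by
        rw [cvec, pow_one]; exact F1 m hm
      have he : esingle m 0 hk = (2:ℚ)⁻¹ • ((4:ℚ) • cvec m 0 - cvec m 1) := by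
        rw [hc0, hc1]; module
      rw [he]
      exact Submodule.smul_mem _ _ (Submodule.sub_mem _
        (Submodule.smul_mem _ _ (cvec_mem m (by omega))) (cvec_mem m (by omega)))
    | 1, hk =>
      have h0 : esingle m 0 (by omega) ∈ K m 1 := ih 0 (by omega) (by omega)
      have he : esingle m 1 hk = Qp m *ᵥ esingle m 0 (by omega) - esingle m 0 (by omega) := by
        rw [F2 m hm]; abel
      rw [he]
      exact Submodule.sub_mem _ (mapA m h0) (K_mono m (by omega) h0)
    | (k+2), hk =>
      have hk1 : esingle m (k+1) (by omega) ∈ K m (k+2) := ih (k+1) (by omega) (by omega)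
      have hk0 : esingle m k (by omega) ∈ K m (k+1) := ih k (by omega) (by omega)
      have he : esingle m (k+2) hk = Qp m *ᵥ esingle m (k+1) (by omega) -
          esingle m k (by omega) - (2:ℚ) • esingle m (k+1) (by omega) := by
        rw [F3 m k (by omega)]; abel
      rw [he]
      exact Submodule.sub_mem _ (Submodule.sub_mem _ (mapA m hk1)
        (K_mono m (by omega) hk0)) (Submodule.smul_mem _ _ (K_mono m (by omega) hk1))

lemma range_top (m : ℕ) (hm : 2 ≤ m) : LinearMap.range (B m).mulVecLin = ⊤ := by
  have hcol : ∀ j : ℕ, j < 2*m → cvec m j ∈ LinearMap.range (B m).mulVecLin := by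
    intro j hj
    refine ⟨Pi.single ⟨j, hj⟩ 1, ?_⟩
    rw [Matrix.mulVecLin_apply, Matrix.mulVec_single]
    funext k
    simp only [B, cvec, of_apply, mul_one, uvec, MulOpposite.op_one, one_smul]
    rfl
  have hKle : ∀ t : ℕ, t < 2*m → K m t ≤ LinearMap.range (B m).mulVecLin := by
    intro t ht
    rw [K, Submodule.span_le]
    rintro _ ⟨j, hj, rfl⟩
    exact hcol j (by simp at hj; omega)
  have hsingle : ∀ k : Fin m, Pi.single k (1:ℚ) ∈ LinearMap.range (B m).mulVecLin := by
    intro k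
    have h1 : esingle m (k:ℕ) k.isLt ∈ K m ((k:ℕ)+1) := eMem m hm (k:ℕ) k.isLt
    have h2 := hKle ((k:ℕ)+1) (by have := k.isLt; omega) h1
    simpa [esingle, Fin.eta] using h2
  rw [eq_top_iff]
  intro x _
  have hx : x = ∑ k : Fin m, Pi.single k (x k) := (Finset.univ_sum_single x).symm
  rw [hx]
  refine Submodule.sum_mem _ fun k _ => ?_
  have : Pi.single k (x k) = x k • (Pi.single k (1:ℚ) : Fin m → ℚ) := by
    rw [← Pi.single_smul, smul_eq_mul, mul_one]
  rw [this]
  exact Submodule.smul_mem _ _ (hsingle k)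

lemma rank_B (m : ℕ) (hm : 2 ≤ m) : (B m).rank = m := by
  rw [Matrix.rank, range_top m hm, finrank_top]
  simp [Module.finrank_fin_fun]

lemma main (m : ℕ) (hm : 2 ≤ m) : ((WQAn (2*m)).map (Int.cast : ℤ → ℚ)).rank = m := by
  rw [W_eq m hm]
  apply le_antisymm
  · calc (U m * B m).rank ≤ (B m).rank := Matrix.rank_mul_le_right _ _
      _ = m := rank_B m hm
  · have h : Rsel m * (U m * B m) = B m := by rw [← Matrix.mul_assoc, RU, Matrix.one_mul]
    calc m = (B m).rank := (rank_B m hm).symm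
      _ = (Rsel m * (U m * B m)).rank := by rw [h]
      _ ≤ (U m * B m).rank := Matrix.rank_mul_le_right _ _

end WQAux

theorem rank_WQAn_even (n : ℕ) (hn : 4 ≤ n) (heven : Even n) :
    ((WQAn n).map (Int.cast : ℤ → ℚ)).rank = (n + 1) / 2 := by
  obtain ⟨m, hm⟩ : ∃ m, n = 2*m := by
    rcases heven with ⟨t, ht⟩; exact ⟨t, by omega⟩
  subst hm
  rw [WQAux.main m (by omega)]
  omega
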